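/- Define the multiple Hermite polynomials H_{n,m} as the monic polynomials of degree n+m satisfying ∫_{−∞}^∞ x^k H_{n,m}(x) e^{−x²+c₁x} dx = 0 for k = 0,…,n−1 and ∫_{−∞}^∞ x^k H_{n,m}(x) e^{−x²+c₂x} dx = 0 for k = 0,…,m−1, with c₁ ≠ c₂. Then the raising relation (e^{−x²+c₁x} H_{n−1,m}(x))' = −2 e^{−x²+c₁x} H_{n,m}(x) holds, i.e., H_{n−1,m}'(x) = −2H_{n,m}(x) + (2x − c₁)H_{n−1,m}(x). -/

import Mathlib

open MeasureTheory

namespace MHaux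

open MeasureTheory Polynomial Filter Topology Real


noncomputable def gmom (i : ℕ) : ℝ := ∫ y : ℝ, y ^ i * Real.exp (-y ^ 2)

lemma integrable_pow_gauss (n : ℕ) : Integrable fun x : ℝ => x ^ n * Real.exp (-x ^ 2) := by
  have h := integrable_rpow_mul_exp_neg_mul_sq (b := 1) one_pos (s := (n : ℝ))
    (by have : (0:ℝ) ≤ n := Nat.cast_nonneg n; linarith)
  simpa [Real.rpow_natCast] using h

lemma integrable_poly_gauss (P : ℝ[X]) :
    Integrable fun x : ℝ => P.eval x * Real.exp (-x ^ 2) := by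
  have h : (fun x : ℝ => P.eval x * Real.exp (-x ^ 2))
      = fun x => ∑ i ∈ Finset.range (P.natDegree + 1),
          P.coeff i * (x ^ i * Real.exp (-x ^ 2)) := by
    funext x
    rw [eval_eq_sum_range, Finset.sum_mul]
    simp [mul_assoc]
  rw [h]
  exact integrable_finset_sum _ fun i _ => (integrable_pow_gauss i).const_mul _

lemma integrable_shift_poly_gauss (P : ℝ[X]) (t : ℝ) :
    Integrable fun y : ℝ => P.eval (y + t) * Real.exp (-y ^ 2) := by
  have := integrable_poly_gauss (taylor t P)
  simpa [taylor_eval] using this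

lemma tendsto_poly_gauss_atTop (P : ℝ[X]) :
    Tendsto (fun x : ℝ => P.eval x * Real.exp (-x ^ 2)) atTop (𝓝 0) := by
  have h1 := P.tendsto_div_exp_atTop
  have h2 : Tendsto (fun x : ℝ => Real.exp (x - x ^ 2)) atTop (𝓝 0) := by
    apply Real.tendsto_exp_atBot.comp
    apply tendsto_atBot_mono' _ _ tendsto_neg_atTop_atBot
    filter_upwards [eventually_ge_atTop (2:ℝ)] with x hx
    nlinarith
  have h3 := h1.mul h2
  rw [mul_zero] at h3
  refine h3.congr fun x => ?_
  rw [div_mul_eq_mul_div, div_eq_iff (Real.exp_ne_zero x), mul_assoc, ← Real.exp_add]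
  ring_nf

lemma tendsto_poly_gauss_atBot (P : ℝ[X]) :
    Tendsto (fun x : ℝ => P.eval x * Real.exp (-x ^ 2)) atBot (𝓝 0) := by
  have h := (tendsto_poly_gauss_atTop (P.comp (-X))).comp tendsto_neg_atBot_atTop
  refine h.congr fun x => ?_
  simp [Function.comp, eval_comp]


lemma integral_deriv_poly_gauss (P : ℝ[X]) :
    ∫ y : ℝ, ((derivative P).eval y - 2 * y * P.eval y) * Real.exp (-y ^ 2) = 0 := by
  have hderiv : ∀ y : ℝ, HasDerivAt (fun y : ℝ => P.eval y * Real.exp (-y ^ 2))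
      (((derivative P).eval y - 2 * y * P.eval y) * Real.exp (-y ^ 2)) y := by
    intro y
    have h1 : HasDerivAt (fun y : ℝ => P.eval y) ((derivative P).eval y) y :=
      P.hasDerivAt y
    have h0 : HasDerivAt (fun y : ℝ => -y ^ 2) (-(2 * y)) y := by
      simpa using (hasDerivAt_pow 2 y).fun_neg
    have h2 := h0.exp
    have := h1.fun_mul h2
    refine this.congr_deriv ?_
    ring
  have hint : Integrable fun y : ℝ =>
      ((derivative P).eval y - 2 * y * P.eval y) * Real.exp (-y ^ 2) := by
    have h : (fun y : ℝ => ((derivative P).eval y - 2 * y * P.eval y) * Real.exp (-y ^ 2))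
        = fun y => (derivative P - C 2 * (X * P)).eval y * Real.exp (-y ^ 2) := by
      funext y; simp; ring
    rw [h]; exact integrable_poly_gauss _
  have := integral_of_hasDerivAt_of_tendsto hderiv hint
    (tendsto_poly_gauss_atBot P) (tendsto_poly_gauss_atTop P)
  simpa using this

noncomputable def T (P : ℝ[X]) : ℝ[X] :=
  ∑ i ∈ Finset.range (P.natDegree + 1), gmom i • hasseDeriv i P

lemma hasseDeriv_zero_of_lt {P : ℝ[X]} {i : ℕ} (h : P.natDegree < i) :
    hasseDeriv i P = 0 := by
  ext k
  rw [hasseDeriv_coeff]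
  rw [P.coeff_eq_zero_of_natDegree_lt (lt_of_lt_of_le h (Nat.le_add_left i k))]
  simp

lemma T_eq (P : ℝ[X]) {N : ℕ} (h : P.natDegree < N) :
    T P = ∑ i ∈ Finset.range N, gmom i • hasseDeriv i P := by
  apply Finset.sum_subset
  · exact Finset.range_subset_range.2 h
  · intro i _ hi
    rw [Finset.mem_range, not_lt] at hi
    rw [hasseDeriv_zero_of_lt (lt_of_lt_of_le (Nat.lt_succ_self _) hi), smul_zero]

lemma T_eval (P : ℝ[X]) (t : ℝ) :
    (T P).eval t = ∫ y : ℝ, P.eval (y + t) * Real.exp (-y ^ 2) := by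
  have h1 : ∀ y : ℝ, P.eval (y + t)
      = ∑ i ∈ Finset.range (P.natDegree + 1), (hasseDeriv i P).eval t * y ^ i := by
    intro y
    rw [← taylor_eval t P y]
    rw [eval_eq_sum_range' (n := P.natDegree + 1)
      (by rw [natDegree_taylor]; exact Nat.lt_succ_self _)]
    simp [taylor_coeff]
  simp_rw [h1, Finset.sum_mul]
  rw [integral_finset_sum _ (fun i _ => by
    simp_rw [mul_assoc]
    exact (integrable_pow_gauss i).const_mul _)]
  simp_rw [mul_assoc, MeasureTheory.integral_const_mul]
  simp only [T, eval_finset_sum, eval_smul, smul_eq_mul]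
  refine Finset.sum_congr rfl fun i _ => ?_
  rw [gmom, mul_comm]


lemma integral_weight (P : ℝ[X]) (c : ℝ) :
    ∫ x : ℝ, P.eval x * Real.exp (-x ^ 2 + c * x)
      = Real.exp (c ^ 2 / 4) * (T P).eval (c / 2) := by
  have key : ∀ x : ℝ, P.eval x * Real.exp (-x ^ 2 + c * x)
      = Real.exp (c ^ 2 / 4) * (P.eval x * Real.exp (-(x - c / 2) ^ 2)) := by
    intro x
    rw [mul_left_comm, ← Real.exp_add]
    ring_nf
  simp_rw [key]
  rw [MeasureTheory.integral_const_mul]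
  congr 1
  rw [T_eval]
  have h2 : ∀ x : ℝ, P.eval x * Real.exp (-(x - c / 2) ^ 2)
      = (fun y : ℝ => P.eval (y + c / 2) * Real.exp (-y ^ 2)) (x - c / 2) := by
    intro x; simp
  simp_rw [h2]
  exact integral_sub_right_eq_self (fun y : ℝ => P.eval (y + c / 2) * Real.exp (-y ^ 2)) (c/2)

lemma T_add (P Q : ℝ[X]) : T (P + Q) = T P + T Q := by
  have h := (natDegree_add_le P Q).trans_lt (Nat.lt_succ_self (max P.natDegree Q.natDegree))
  rw [T_eq (P + Q) h, T_eq P ((le_max_left _ _).trans_lt (Nat.lt_succ_self _)),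
    T_eq Q ((le_max_right _ _).trans_lt (Nat.lt_succ_self _)), ← Finset.sum_add_distrib]
  refine Finset.sum_congr rfl fun i _ => ?_
  rw [map_add, smul_add]

lemma T_smul (a : ℝ) (P : ℝ[X]) : T (a • P) = a • T P := by
  rw [T_eq (a • P) ((natDegree_smul_le a P).trans_lt (Nat.lt_succ_self _)),
    T, Finset.smul_sum]
  refine Finset.sum_congr rfl fun i _ => ?_
  rw [_root_.map_smul, smul_comm]

lemma T_sub (P Q : ℝ[X]) : T (P - Q) = T P - T Q := by
  have h := T_add (P - Q) Q
  rw [sub_add_cancel] at h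
  rw [h]; ring

lemma T_C_mul (a : ℝ) (P : ℝ[X]) : T (C a * P) = C a * T P := by
  rw [← smul_eq_C_mul, ← smul_eq_C_mul, T_smul]

lemma T_derivative (P : ℝ[X]) : T (derivative P) = derivative (T P) := by
  have hcomm : ∀ (i : ℕ) (Q : ℝ[X]),
      hasseDeriv i (derivative Q) = derivative (hasseDeriv i Q) := by
    intro i Q
    rw [← hasseDeriv_one', ← hasseDeriv_one']
    have h1 := LinearMap.congr_fun (hasseDeriv_comp (R := ℝ) i 1) Q
    have h2 := LinearMap.congr_fun (hasseDeriv_comp (R := ℝ) 1 i) Q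
    simp only [LinearMap.comp_apply, LinearMap.smul_apply] at h1 h2
    rw [h1, h2, Nat.choose_succ_self_right, Nat.add_comm 1 i, Nat.choose_one_right]
  rw [T_eq (derivative P) (N := P.natDegree + 1)
      (lt_of_le_of_lt ((natDegree_derivative_le P).trans (Nat.sub_le _ _)) (Nat.lt_succ_self _)),
    T, map_sum]
  refine Finset.sum_congr rfl fun i _ => ?_
  rw [_root_.map_smul derivative, hcomm]


lemma derivative_taylor (t : ℝ) (P : ℝ[X]) :
    derivative (taylor t P) = taylor t (derivative P) := by
  rw [taylor_apply, taylor_apply, derivative_comp]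
  simp

lemma T_X_mul (P : ℝ[X]) :
    T (X * P) = X * T P + (2⁻¹ : ℝ) • derivative (T P) := by
  apply Polynomial.funext
  intro t
  rw [T_eval]
  have hsplit : ∀ y : ℝ, (X * P).eval (y + t) * Real.exp (-y ^ 2)
      = t * (P.eval (y + t) * Real.exp (-y ^ 2))
        + y * (taylor t P).eval y * Real.exp (-y ^ 2) := by
    intro y
    rw [taylor_eval]
    simp only [eval_mul, eval_X]
    ring
  simp_rw [hsplit]
  have hint1 : Integrable fun y : ℝ => t * (P.eval (y + t) * Real.exp (-y ^ 2)) :=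
    (integrable_shift_poly_gauss P t).const_mul t
  have hint2 : Integrable fun y : ℝ => y * (taylor t P).eval y * Real.exp (-y ^ 2) := by
    have := integrable_poly_gauss (X * taylor t P)
    simpa [eval_mul] using this
  rw [MeasureTheory.integral_add hint1 hint2, MeasureTheory.integral_const_mul]
  have hparts : ∫ y : ℝ, y * (taylor t P).eval y * Real.exp (-y ^ 2)
      = 2⁻¹ * ∫ y : ℝ, (derivative P).eval (y + t) * Real.exp (-y ^ 2) := by
    have h0 := integral_deriv_poly_gauss (taylor t P)
    have hint3 : Integrable fun y : ℝ =>
        (derivative (taylor t P)).eval y * Real.exp (-y ^ 2) := integrable_poly_gauss _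
    rw [show (fun y : ℝ => ((derivative (taylor t P)).eval y
          - 2 * y * (taylor t P).eval y) * Real.exp (-y ^ 2))
        = (fun y : ℝ => (derivative (taylor t P)).eval y * Real.exp (-y ^ 2)
          - 2 * (y * (taylor t P).eval y * Real.exp (-y ^ 2))) from funext fun y => by ring]
      at h0
    rw [MeasureTheory.integral_sub hint3 (hint2.const_mul 2),
      MeasureTheory.integral_const_mul, sub_eq_zero] at h0
    have : ∫ y : ℝ, (derivative (taylor t P)).eval y * Real.exp (-y ^ 2)
        = ∫ y : ℝ, (derivative P).eval (y + t) * Real.exp (-y ^ 2) := by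
      refine MeasureTheory.integral_congr_ae (Filter.Eventually.of_forall fun y => ?_)
      simp only [derivative_taylor, taylor_eval]
    rw [this] at h0
    rw [h0]
    ring
  rw [hparts, ← T_eval, ← T_eval]
  rw [T_derivative]
  simp [smul_eq_mul]


lemma T_weight_op (P : ℝ[X]) (c : ℝ) :
    (T (derivative P - C 2 * (X * P) + C c * P)).eval (c / 2) = 0 := by
  rw [T_add, T_sub, T_C_mul, T_C_mul, T_X_mul, T_derivative]
  simp only [eval_add, eval_sub, eval_mul, eval_C, eval_X, eval_smul, smul_eq_mul]
  ring

lemma T_ortho_step (P : ℝ[X]) (c : ℝ) (k : ℕ) :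
    (T (X ^ k * (derivative P - C 2 * (X * P) + C c * P))).eval (c / 2)
      = -(k : ℝ) * (T (X ^ (k - 1) * P)).eval (c / 2) := by
  have hder : derivative (X ^ k * P)
      = C (k : ℝ) * X ^ (k - 1) * P + X ^ k * derivative P := by
    rw [derivative_mul, derivative_X_pow]
  have hE : X ^ k * (derivative P - C 2 * (X * P) + C c * P)
      = (derivative (X ^ k * P) - C 2 * (X * (X ^ k * P)) + C c * (X ^ k * P))
        - C (k : ℝ) * (X ^ (k - 1) * P) := by
    rw [hder]; ring
  rw [hE, T_sub, T_C_mul, eval_sub, eval_mul, eval_C, T_weight_op]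
  ring

lemma eval_zero_of_mem_span {S : Set ℝ[X]} {t : ℝ} (hS : ∀ p ∈ S, p.eval t = 0)
    {q : ℝ[X]} (hq : q ∈ Ideal.span S) : q.eval t = 0 := by
  induction hq using Submodule.span_induction with
  | mem p hp => exact hS p hp
  | zero => simp
  | add p q _ _ hp hq => rw [eval_add, hp, hq, add_zero]
  | smul r p _ hp => rw [smul_eq_mul, eval_mul, hp, mul_zero]

lemma deriv_iter_mem (D : ℝ[X]) (k : ℕ) :
    derivative^[k] (T D)
      ∈ Ideal.span ((fun j => T (X ^ j * D)) '' Set.Iic k) := by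
  induction k with
  | zero =>
    apply Ideal.subset_span
    exact ⟨0, Set.mem_Iic.2 le_rfl, by simp⟩
  | succ k ih =>
    rw [Function.iterate_succ_apply']
    have step : ∀ p ∈ Ideal.span ((fun j => T (X ^ j * D)) '' Set.Iic k),
        derivative p ∈ Ideal.span ((fun j => T (X ^ j * D)) '' Set.Iic (k + 1))
          ∧ p ∈ Ideal.span ((fun j => T (X ^ j * D)) '' Set.Iic (k + 1)) := by
      intro p hp
      induction hp using Submodule.span_induction with
      | mem p hp =>
        obtain ⟨j, hj, rfl⟩ := hp
        dsimp only
        have hmem1 : T (X ^ (j + 1) * D)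
            ∈ Ideal.span ((fun j => T (X ^ j * D)) '' Set.Iic (k + 1)) :=
          Ideal.subset_span ⟨j + 1, Set.mem_Iic.2 (Nat.succ_le_succ hj), rfl⟩
        have hmem0 : T (X ^ j * D)
            ∈ Ideal.span ((fun j => T (X ^ j * D)) '' Set.Iic (k + 1)) :=
          Ideal.subset_span ⟨j, Set.mem_Iic.2 (le_trans hj (Nat.le_succ k)), rfl⟩
        refine ⟨?_, hmem0⟩
        have hX := T_X_mul (X ^ j * D)
        rw [show X * (X ^ j * D) = X ^ (j + 1) * D by ring] at hX
        have h2 : derivative (T (X ^ j * D))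
            = (2 : ℝ) • T (X ^ (j + 1) * D) - (2 : ℝ) • (X * T (X ^ j * D)) := by
          rw [hX, smul_add, smul_smul]
          norm_num
        rw [h2]
        exact sub_mem (Submodule.smul_of_tower_mem _ _ hmem1)
          (Submodule.smul_of_tower_mem _ _ (Ideal.mul_mem_left _ X hmem0))
      | zero => simp
      | add p q _ _ hp hq =>
        exact ⟨by rw [derivative_add]; exact add_mem hp.1 hq.1, add_mem hp.2 hq.2⟩
      | smul r p _ hp =>
        refine ⟨?_, Ideal.mul_mem_left _ _ hp.2⟩
        rw [smul_eq_mul, derivative_mul]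
        exact add_mem (Ideal.mul_mem_left _ _ hp.2) (Ideal.mul_mem_left _ _ hp.1)
    exact (step _ ih).1

lemma pow_dvd_of_iterated_deriv (P : ℝ[X]) (t : ℝ) (K : ℕ)
    (h : ∀ k ≤ K, (derivative^[k] P).eval t = 0) : (X - C t) ^ (K + 1) ∣ P := by
  have hh : ∀ k ≤ K, (hasseDeriv k P).eval t = 0 := by
    intro k hk
    have h2 := congrFun (@factorial_smul_hasseDeriv ℝ _ k) P
    simp only [LinearMap.smul_apply] at h2
    have h3 := congrArg (Polynomial.eval t) h2
    rw [h k hk] at h3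
    have h4 : (k.factorial : ℝ) * (hasseDeriv k P).eval t = 0 := by
      simpa [nsmul_eq_mul] using h3
    have : (k.factorial : ℝ) ≠ 0 := Nat.cast_ne_zero.2 (Nat.factorial_ne_zero k)
    exact (mul_eq_zero.1 h4).resolve_left this
  conv_rhs => rw [← sum_taylor_eq P t]
  rw [Polynomial.sum]
  apply Finset.dvd_sum
  intro i hi
  have hne : (taylor t P).coeff i ≠ 0 := mem_support_iff.1 hi
  have hKi : K + 1 ≤ i := by
    by_contra hcon
    push_neg at hcon
    exact hne (by rw [taylor_coeff]; exact hh i (Nat.lt_succ_iff.1 hcon))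
  exact Dvd.dvd.mul_left (pow_dvd_pow _ hKi) _

lemma natDegree_T_le (P : ℝ[X]) : (T P).natDegree ≤ P.natDegree := by
  apply natDegree_sum_le_of_forall_le
  intro i _
  exact (natDegree_smul_le _ _).trans
    ((natDegree_hasseDeriv_le P i).trans (Nat.sub_le _ _))

lemma T_ne_zero {P : ℝ[X]} (hP : P ≠ 0) : T P ≠ 0 := by
  have hcoeff : (T P).coeff P.natDegree = gmom 0 * P.coeff P.natDegree := by
    rw [T, finset_sum_coeff]
    rw [Finset.sum_eq_single 0]
    · rw [coeff_smul, hasseDeriv_zero, smul_eq_mul]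
      rfl
    · intro i _ hi
      rw [coeff_smul, hasseDeriv_coeff, P.coeff_eq_zero_of_natDegree_lt
        (by omega : P.natDegree < P.natDegree + i)]
      simp
    · intro hmem
      exact absurd (Finset.mem_range.2 (Nat.succ_pos _)) hmem
  have hg : gmom 0 = Real.sqrt π := by
    rw [gmom]
    have := integral_gaussian 1
    simpa using this
  intro h0
  rw [h0, coeff_zero] at hcoeff
  have : P.coeff P.natDegree = 0 := by
    rcases mul_eq_zero.1 hcoeff.symm with h | h
    · exact absurd h (by rw [hg]; positivity)
    · exact h
  exact hP (leadingCoeff_eq_zero.1 this)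

end MHaux

open MHaux Polynomial in
/-- Raising relation for multiple Hermite polynomials:
`H_{n-1,m}'(x) = -2 H_{n,m}(x) + (2x - c₁) H_{n-1,m}(x)` (stated with `n-1` replaced by `n`). -/
theorem multiple_hermite_raising (c₁ c₂ : ℝ) (hc : c₁ ≠ c₂)
    (H : ℕ → ℕ → Polynomial ℝ)
    (hmonic : ∀ n m, (H n m).Monic)
    (hdeg : ∀ n m, (H n m).natDegree = n + m)
    (horth1 : ∀ n m, ∀ k < n,
      ∫ x : ℝ, x ^ k * (H n m).eval x * Real.exp (-x ^ 2 + c₁ * x) = 0)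
    (horth2 : ∀ n m, ∀ k < m,
      ∫ x : ℝ, x ^ k * (H n m).eval x * Real.exp (-x ^ 2 + c₂ * x) = 0)
    (n m : ℕ) :
    ∀ x : ℝ, ((H n m).derivative).eval x
      = -2 * (H (n + 1) m).eval x + (2 * x - c₁) * (H n m).eval x := by
  have conv : ∀ (P : ℝ[X]) (c : ℝ) (k : ℕ),
      (∫ x : ℝ, x ^ k * P.eval x * Real.exp (-x ^ 2 + c * x))
        = Real.exp (c ^ 2 / 4) * (T (X ^ k * P)).eval (c / 2) := by
    intro P c k
    rw [← integral_weight (X ^ k * P) c]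
    refine MeasureTheory.integral_congr_ae (Filter.Eventually.of_forall fun x => ?_)
    simp [eval_pow]
  have expne : ∀ c : ℝ, Real.exp (c ^ 2 / 4) ≠ 0 := fun c => Real.exp_ne_zero _
  have e1G : ∀ k ≤ n, (T (X ^ k * H (n + 1) m)).eval (c₁ / 2) = 0 := by
    intro k hk
    have h0 := horth1 (n + 1) m k (by omega)
    rw [conv] at h0
    exact (mul_eq_zero.1 h0).resolve_left (expne c₁)
  have e2G : ∀ k < m, (T (X ^ k * H (n + 1) m)).eval (c₂ / 2) = 0 := by
    intro k hk
    have h0 := horth2 (n + 1) m k hk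
    rw [conv] at h0
    exact (mul_eq_zero.1 h0).resolve_left (expne c₂)
  have e1H : ∀ k < n, (T (X ^ k * H n m)).eval (c₁ / 2) = 0 := by
    intro k hk
    have h0 := horth1 n m k hk
    rw [conv] at h0
    exact (mul_eq_zero.1 h0).resolve_left (expne c₁)
  have e2H : ∀ k < m, (T (X ^ k * H n m)).eval (c₂ / 2) = 0 := by
    intro k hk
    have h0 := horth2 n m k hk
    rw [conv] at h0
    exact (mul_eq_zero.1 h0).resolve_left (expne c₂)
  set QQ : ℝ[X] := derivative (H n m) - C 2 * (X * H n m) + C c₁ * H n m with hQQ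
  set D : ℝ[X] := H (n + 1) m + (2⁻¹ : ℝ) • QQ with hD
  have e1QQ : ∀ k ≤ n, (T (X ^ k * QQ)).eval (c₁ / 2) = 0 := by
    intro k hk
    rw [hQQ, T_ortho_step (H n m) c₁ k]
    cases k with
    | zero => simp
    | succ k' =>
      rw [show k' + 1 - 1 = k' from rfl, e1H k' (by omega), mul_zero]
  have e2QQ : ∀ k < m, (T (X ^ k * QQ)).eval (c₂ / 2) = 0 := by
    intro k hk
    have hsplit : X ^ k * QQ
        = X ^ k * (derivative (H n m) - C 2 * (X * H n m) + C c₂ * H n m)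
          + C (c₁ - c₂) * (X ^ k * H n m) := by
      rw [hQQ, C_sub]; ring
    rw [hsplit, T_add, T_C_mul, eval_add, eval_mul, eval_C,
      T_ortho_step (H n m) c₂ k, e2H k hk, mul_zero, add_zero]
    cases k with
    | zero => simp
    | succ k' =>
      rw [show k' + 1 - 1 = k' from rfl, e2H k' (by omega), mul_zero]
  have eD1 : ∀ k ≤ n, (T (X ^ k * D)).eval (c₁ / 2) = 0 := by
    intro k hk
    have hsplit : X ^ k * D = X ^ k * H (n + 1) m + (2⁻¹ : ℝ) • (X ^ k * QQ) := by
      rw [hD, mul_add, mul_smul_comm]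
    rw [hsplit, T_add, T_smul, eval_add, eval_smul, e1G k hk, e1QQ k hk,
      smul_zero, add_zero]
  have eD2 : ∀ k < m, (T (X ^ k * D)).eval (c₂ / 2) = 0 := by
    intro k hk
    have hsplit : X ^ k * D = X ^ k * H (n + 1) m + (2⁻¹ : ℝ) • (X ^ k * QQ) := by
      rw [hD, mul_add, mul_smul_comm]
    rw [hsplit, T_add, T_smul, eval_add, eval_smul, e2G k hk, e2QQ k hk,
      smul_zero, add_zero]
  have hT1 : ∀ k ≤ n, (derivative^[k] (T D)).eval (c₁ / 2) = 0 := by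
    intro k hk
    refine eval_zero_of_mem_span (fun p hp => ?_) (deriv_iter_mem D k)
    obtain ⟨j, hj, rfl⟩ := hp
    exact eD1 j (le_trans hj hk)
  have hT2 : ∀ k, k < m → (derivative^[k] (T D)).eval (c₂ / 2) = 0 := by
    intro k hk
    refine eval_zero_of_mem_span (fun p hp => ?_) (deriv_iter_mem D k)
    obtain ⟨j, hj, rfl⟩ := hp
    exact eD2 j (lt_of_le_of_lt hj hk)
  have hdvd1 : (X - C (c₁ / 2)) ^ (n + 1) ∣ T D :=
    pow_dvd_of_iterated_deriv _ _ n hT1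
  have hdvd2 : (X - C (c₂ / 2)) ^ m ∣ T D := by
    cases m with
    | zero => simp
    | succ m' =>
      exact pow_dvd_of_iterated_deriv _ _ m' fun k hk => hT2 k (by omega)
  have hne2 : c₁ / 2 ≠ c₂ / 2 := fun h => hc (by linarith)
  have hcop : IsCoprime ((X - C (c₁ / 2)) ^ (n + 1)) ((X - C (c₂ / 2)) ^ m) :=
    (isCoprime_X_sub_C_of_isUnit_sub ((sub_ne_zero.2 hne2).isUnit)).pow
  have hdvd := hcop.mul_dvd hdvd1 hdvd2
  have hDdeg : D.natDegree ≤ n + m := by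
    rw [natDegree_le_iff_coeff_eq_zero]
    intro j hj
    obtain ⟨j', rfl⟩ : ∃ j', j = j' + 1 := ⟨j - 1, by omega⟩
    have hHd : (H n m).natDegree = n + m := hdeg n m
    have hGd : (H (n + 1) m).natDegree = n + m + 1 := by rw [hdeg]; omega
    have hder : (derivative (H n m)).coeff (j' + 1) = 0 := by
      rw [coeff_derivative, (H n m).coeff_eq_zero_of_natDegree_lt (by omega), zero_mul]
    have hXH : (X * H n m).coeff (j' + 1) = (H n m).coeff j' := coeff_X_mul _ _
    have hHcoeff : (H n m).coeff (j' + 1) = 0 :=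
      (H n m).coeff_eq_zero_of_natDegree_lt (by omega)
    rw [hD, hQQ, coeff_add, coeff_smul, coeff_add, coeff_sub, coeff_C_mul, coeff_C_mul,
      hder, hXH, hHcoeff, mul_zero, add_zero, zero_sub]
    rcases eq_or_lt_of_le (show n + m + 1 ≤ j' + 1 by omega) with heq | hlt
    · have h1 : (H (n + 1) m).coeff (j' + 1) = 1 := by
        rw [← heq, ← hGd]; exact (hmonic (n + 1) m).coeff_natDegree
      have h2 : (H n m).coeff j' = 1 := by
        have : j' = n + m := by omega
        rw [this, ← hHd]; exact (hmonic n m).coeff_natDegree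
      rw [h1, h2]
      norm_num
    · have h1 : (H (n + 1) m).coeff (j' + 1) = 0 :=
        (H (n + 1) m).coeff_eq_zero_of_natDegree_lt (by omega)
      have h2 : (H n m).coeff j' = 0 :=
        (H n m).coeff_eq_zero_of_natDegree_lt (by omega)
      rw [h1, h2]
      norm_num
  have hTD0 : T D = 0 := by
    refine eq_zero_of_dvd_of_natDegree_lt hdvd ?_
    have h1 := natDegree_T_le D
    have hprod : ((X - C (c₁ / 2)) ^ (n + 1) * (X - C (c₂ / 2)) ^ m).natDegree
        = (n + 1) + m := by
      rw [natDegree_mul (pow_ne_zero _ (X_sub_C_ne_zero _))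
        (pow_ne_zero _ (X_sub_C_ne_zero _))]
      simp [natDegree_pow, natDegree_X_sub_C]
    rw [hprod]
    omega
  have hD0 : D = 0 := by
    by_contra hne
    exact T_ne_zero hne hTD0
  intro x
  have hx := congrArg (Polynomial.eval x) hD0
  rw [hD, hQQ] at hx
  simp only [eval_add, eval_sub, eval_mul, eval_smul, eval_C, eval_X, eval_zero,
    smul_eq_mul] at hx
  linear_combination (2 : ℝ) * hx
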